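/- (Swap lemma.) Let G be a DAG and let π = (X, u, Y, v, Z) be a topological ordering of G, written as the concatenation of the block X, the single vertex u, the block Y, the single vertex v, and the block Z, with u ∉ an(G,v). Let A = Y ∩ an(G,v). Then the ordering (X, A, v, u, Y∖A, Z), in which the vertices inside each of A and Y∖A keep their relative order from π, is also a topological ordering of G. -/

import Mathlib

/-! Basic graphical-model definitions: DAGs as binary relations on a finite
vertex type, d-separation via paths (lists of vertices), Markov equivalence,
and definite (non-)ancestral relations. -/

variable {V : Type*}

/-- Two nodes are adjacent in the digraph `E` if there is an edge between them
in either direction. -/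
def Adjacent (E : V → V → Prop) (a b : V) : Prop := E a b ∨ E b a

/-- A digraph is acyclic if it has no directed cycles. -/
def Acyclic (E : V → V → Prop) : Prop := ∀ v : V, ¬ Relation.TransGen E v v

/-- `u` is an ancestor of `v`: there is a directed path from `u` to `v`
(by convention, `v` is an ancestor of itself). -/
def Anc (E : V → V → Prop) (u v : V) : Prop := Relation.ReflTransGen E u v

/-- A list of vertices is a path in the skeleton of `E`: consecutive vertices
are adjacent and no vertex repeats. -/
def IsPath (E : V → V → Prop) (p : List V) : Prop :=
  p.Nodup ∧ List.Chain' (Adjacent E) p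

/-- A path `p` is d-connecting given the conditioning set `C` if every collider
on it is an ancestor of an element of `C` and every non-collider on it is
outside `C`.  Interior vertices of `p` are exactly the middle elements `x` of
consecutive triples `[a, x, b]` of `p`; such an `x` is a collider when both
incident edges point into it. -/
def IsDConnectingPath (E : V → V → Prop) (C : Set V) (p : List V) : Prop :=
  ∀ a x b : V, [a, x, b] <:+: p →
    ((E a x ∧ E b x) → ∃ c ∈ C, Anc E x c) ∧ (¬ (E a x ∧ E b x) → x ∉ C)

/-- `u` and `v` are d-connected given `C` in `E`. -/
def DConn (E : V → V → Prop) (C : Set V) (u v : V) : Prop :=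
  ∃ p : List V, IsPath E p ∧ p.head? = some u ∧ p.getLast? = some v ∧
    IsDConnectingPath E C p

/-- `u` and `v` are d-separated given `C` in `E`. -/
def DSep (E : V → V → Prop) (C : Set V) (u v : V) : Prop := ¬ DConn E C u v

/-- Two DAGs on the same vertex set are Markov equivalent if they have exactly
the same d-separation relations. -/
def MarkovEquiv (E E' : V → V → Prop) : Prop :=
  ∀ (u v : V) (C : Set V), u ≠ v → u ∉ C → v ∉ C → (DSep E C u v ↔ DSep E' C u v)

/-- `u` is definite ancestral to `v` (`u ⇝ v`): `u` is an ancestor of `v` in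
every DAG Markov equivalent to `E`. -/
def DefAnc (E : V → V → Prop) (u v : V) : Prop :=
  ∀ E' : V → V → Prop, Acyclic E' → MarkovEquiv E E' → Anc E' u v

/-- `u` is definite non-ancestral to `v` (`u ̸⇝ v`): `u` is not an ancestor of
`v` in any DAG Markov equivalent to `E`. -/
def DefNonAnc (E : V → V → Prop) (u v : V) : Prop :=
  ∀ E' : V → V → Prop, Acyclic E' → MarkovEquiv E E' → ¬ Anc E' u v

/-- The CPDAG of `E` has a directed edge `a → b` iff `a` and `b` are adjacent
and the edge is oriented `a → b` in every member of the Markov equivalence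
class of `E`. -/
def CPDAGDir (E : V → V → Prop) (a b : V) : Prop :=
  Adjacent E a b ∧ ∀ E' : V → V → Prop, Acyclic E' → MarkovEquiv E E' → E' a b

/-- A possibly directed path in the CPDAG of `E`: a path in the skeleton such
that no edge on it is directed backwards (as `x_{i+1} → x_i`) in the CPDAG. -/
def IsPossiblyDirectedPath (E : V → V → Prop) (p : List V) : Prop :=
  p.Nodup ∧ List.Chain' (fun a b => Adjacent E a b ∧ ¬ CPDAGDir E b a) p

/-- A path is unshielded if no three consecutive vertices on it are pairwise
adjacent. -/
def UnshieldedPath (E : V → V → Prop) (p : List V) : Prop :=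
  ∀ a x b : V, [a, x, b] <:+: p → ¬ Adjacent E a b


/-- A list of vertices is a topological ordering of the digraph `E` if it
enumerates all vertices without repetition and every edge goes from an earlier
to a later position. -/
def IsTopoList [DecidableEq V] (E : V → V → Prop) (l : List V) : Prop :=
  l.Nodup ∧ (∀ x : V, x ∈ l) ∧ ∀ a b : V, E a b → l.idxOf a < l.idxOf b

set_option linter.unusedSectionVars false in
open List in
private lemma sub_of_lt [DecidableEq V] : ∀ (l : List V) (a b : V), a ∈ l → b ∈ l →
    l.idxOf a < l.idxOf b → [a, b] <+ l := by
  intro l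
  induction l with
  | nil => simp
  | cons c t ih =>
    intro a b ha hb hlt
    by_cases hac : a = c
    · subst hac
      have hb' : b ≠ a := by
        rintro rfl; simp at hlt
      have hbt : b ∈ t := (List.mem_cons.mp hb).resolve_left hb'
      exact List.cons_sublist_cons.mpr (List.singleton_sublist.mpr hbt)
    · have h1 : List.idxOf a (c :: t) = List.idxOf a t + 1 := by
        simp [List.idxOf_cons, Ne.symm hac]
      have hbc : b ≠ c := by
        rintro rfl; rw [h1] at hlt; simp [List.idxOf_cons] at hlt
      have h2 : List.idxOf b (c :: t) = List.idxOf b t + 1 := by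
        simp [List.idxOf_cons, Ne.symm hbc]
      have hat : a ∈ t := by simpa [hac] using ha
      have hbt : b ∈ t := by simpa [hbc] using hb
      exact (ih a b hat hbt (by omega)).cons c

open List in
private lemma lt_of_sub [DecidableEq V] : ∀ (l : List V) (a b : V), l.Nodup → [a, b] <+ l →
    l.idxOf a < l.idxOf b := by
  intro l
  induction l with
  | nil => intro a b _ h; exact absurd h (by simp)
  | cons c t ih =>
    intro a b hnd h
    cases h with
    | cons _ h' =>
      have hat : a ∈ t := h'.subset (by simp)
      have hbt : b ∈ t := h'.subset (by simp)
      have hct : c ∉ t := (List.nodup_cons.mp hnd).1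
      have hac : a ≠ c := fun e => hct (e ▸ hat)
      have hbc : b ≠ c := fun e => hct (e ▸ hbt)
      have := ih a b (List.nodup_cons.mp hnd).2 h'
      simp [List.idxOf_cons, Ne.symm hac, Ne.symm hbc]
      omega
    | cons_cons _ h' =>
      have hbt : b ∈ t := List.singleton_sublist.mp h'
      have hct : c ∉ t := (List.nodup_cons.mp hnd).1
      have hbc : b ≠ c := fun e => hct (e ▸ hbt)
      have : (c == b) = false := by simp [Ne.symm hbc]
      simp [List.idxOf_cons, this]

open List in
private lemma pair_sub_append {l₁ l₂ : List V} {a b : V} (h : [a, b] <+ l₁ ++ l₂) :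
    [a, b] <+ l₁ ∨ (a ∈ l₁ ∧ b ∈ l₂) ∨ [a, b] <+ l₂ := by
  rcases List.sublist_append_iff.mp h with ⟨s₁, s₂, heq, hs₁, hs₂⟩
  match s₁, heq with
  | [], heq => right; right; simp at heq; rw [← heq] at hs₂; exact hs₂
  | [x], heq =>
    simp at heq
    obtain ⟨rfl, rfl⟩ := heq
    exact Or.inr (Or.inl ⟨List.singleton_sublist.mp hs₁, List.singleton_sublist.mp hs₂⟩)
  | x :: y :: s, heq =>
    left
    have : s = [] ∧ s₂ = [] := by
      have := congrArg List.length heq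
      simp at this
      constructor <;> [skip; skip] <;> simp_all [List.length_eq_zero_iff]
    obtain ⟨rfl, rfl⟩ := this
    simp at heq
    obtain ⟨rfl, rfl⟩ := heq
    simpa using hs₁

open List in
private lemma pair_sub_cons {c : V} {t : List V} {a b : V} (h : [a, b] <+ c :: t) :
    (a = c ∧ b ∈ t) ∨ [a, b] <+ t := by
  cases h with
  | cons _ h' => exact Or.inr h'
  | cons_cons _ h' => exact Or.inl ⟨rfl, List.singleton_sublist.mp h'⟩

open List in
private lemma memsub {p q : V} {l₁ l₂ m : List V} (hp : p ∈ l₁) (hq : q ∈ l₂)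
    (he : l₁ ++ l₂ = m) : [p, q] <+ m := by
  subst he
  exact (List.singleton_sublist.mpr hp).append (List.singleton_sublist.mpr hq)

/-- swap lemma from the proof of Lemma 4: if
`(X, u, Y, v, Z)` is a topological ordering of `E` with `u ∉ an(v)` and
`A = Y ∩ an(v)`, then `(X, A, v, u, Y ∖ A, Z)` is also a topological ordering
of `E`. -/
theorem stmt12 [Fintype V] [DecidableEq V] (E : V → V → Prop) (hE : Acyclic E)
    (X Y Z : List V) (u v : V)
    [inst : ∀ y : V, Decidable (Anc E y v)]
    (hord : IsTopoList E (X ++ u :: (Y ++ v :: Z)))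
    (hnanc : ¬ Anc E u v) :
    IsTopoList E
      (X ++ (Y.filter fun y => decide (Anc E y v)) ++
        v :: u :: ((Y.filter fun y => decide (¬ Anc E y v)) ++ Z)) := by
  classical
  obtain ⟨hnd, hmem, hidx⟩ := hord
  set A := Y.filter (fun y => decide (Anc E y v)) with hA
  set B := Y.filter (fun y => decide (¬ Anc E y v)) with hB
  -- nodup components
  rcases List.nodup_append.mp hnd with ⟨hndX, hnd1, hdisj1⟩
  rcases List.nodup_cons.mp hnd1 with ⟨hu1, hnd2⟩
  rcases List.nodup_append.mp hnd2 with ⟨hndY, hnd3, hdisj2⟩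
  rcases List.nodup_cons.mp hnd3 with ⟨hv1, hndZ⟩
  -- permutation
  have hAB : List.Perm (A ++ B) Y := by
    simpa [hA, hB, decide_not] using
      List.filter_append_perm (fun y => decide (Anc E y v)) Y
  have hperm : List.Perm (X ++ A ++ v :: u :: (B ++ Z)) (X ++ u :: (Y ++ v :: Z)) := by
    refine List.perm_iff_count.mpr fun x => ?_
    have h := hAB.count_eq x
    simp [List.count_append, List.count_cons] at h ⊢
    omega
  have hnd' : (X ++ A ++ v :: u :: (B ++ Z)).Nodup := hperm.nodup_iff.mpr hnd
  refine ⟨hnd', fun x => hperm.mem_iff.mpr (hmem x), ?_⟩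
  intro a b hab
  have hlt := hidx a b hab
  have hne : a ≠ b := by rintro rfl; omega
  have hsub : List.Sublist [a, b] (X ++ u :: (Y ++ v :: Z)) :=
    sub_of_lt _ a b (hmem a) (hmem b) hlt
  suffices hsub' : List.Sublist [a, b] (X ++ A ++ v :: u :: (B ++ Z)) from
    lt_of_sub _ a b hnd' hsub'
  have asym : ∀ p q : V, List.Sublist [p, q] (X ++ u :: (Y ++ v :: Z)) →
      List.Sublist [q, p] (X ++ u :: (Y ++ v :: Z)) → False := by
    intro p q h1 h2
    have t1 := lt_of_sub _ p q hnd h1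
    have t2 := lt_of_sub _ q p hnd h2
    omega
  -- region memberships
  have hra : a ∈ X ∨ a = u ∨ a ∈ Y ∨ a = v ∨ a ∈ Z := by
    have := hmem a; simp at this; tauto
  have hrb : b ∈ X ∨ b = u ∨ b ∈ Y ∨ b = v ∨ b ∈ Z := by
    have := hmem b; simp at this; tauto
  -- peeling helpers
  have peelY : ∀ p q : V, p ∈ Y → q ∈ Y → List.Sublist [p, q] (X ++ u :: (Y ++ v :: Z)) → List.Sublist [p, q] Y := by
    intro p q hp hq h
    have hpR : p ∈ u :: (Y ++ v :: Z) := List.mem_cons_of_mem _ (List.mem_append_left _ hp)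
    rcases pair_sub_append h with h1 | ⟨h1, _⟩ | h1
    · exact absurd (h1.subset (List.mem_cons_self (a := p) (l := [q]))) (fun hpX => hdisj1 _ hpX _ hpR rfl)
    · exact absurd h1 (fun h1 => hdisj1 _ h1 _ hpR rfl)
    rcases pair_sub_cons h1 with ⟨rfl, _⟩ | h2
    · exact absurd hp (fun hp => hu1 (List.mem_append_left _ hp))
    rcases pair_sub_append h2 with h3 | ⟨_, h3⟩ | h3
    · exact h3
    · exact absurd h3 (fun h3 => hdisj2 _ hq _ h3 rfl)
    · exact absurd (h3.subset (List.mem_cons_self (a := p) (l := [q]))) (fun h => hdisj2 _ hp _ h rfl)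
  have peelX : ∀ p q : V, p ∈ X → q ∈ X → List.Sublist [p, q] (X ++ u :: (Y ++ v :: Z)) → List.Sublist [p, q] X := by
    intro p q hp hq h
    rcases pair_sub_append h with h1 | ⟨_, h1⟩ | h1
    · exact h1
    · exact absurd h1 (fun h1 => hdisj1 _ hq _ h1 rfl)
    · exact absurd (h1.subset (List.mem_cons_self (a := p) (l := [q]))) (fun h => hdisj1 _ hp _ h rfl)
  have peelZ : ∀ p q : V, p ∈ Z → q ∈ Z → List.Sublist [p, q] (X ++ u :: (Y ++ v :: Z)) → List.Sublist [p, q] Z := by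
    intro p q hp hq h
    have hpR : p ∈ u :: (Y ++ v :: Z) :=
      List.mem_cons_of_mem _ (List.mem_append_right _ (List.mem_cons_of_mem _ hp))
    rcases pair_sub_append h with h1 | ⟨h1, _⟩ | h1
    · exact absurd (h1.subset (List.mem_cons_self (a := p) (l := [q]))) (fun hpX => hdisj1 _ hpX _ hpR rfl)
    · exact absurd h1 (fun h1 => hdisj1 _ h1 _ hpR rfl)
    rcases pair_sub_cons h1 with ⟨rfl, _⟩ | h2
    · exact absurd (List.mem_append_right Y (List.mem_cons_of_mem _ hp)) hu1
    have hpvZ : p ∈ v :: Z := List.mem_cons_of_mem _ hp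
    rcases pair_sub_append h2 with h3 | ⟨h3, _⟩ | h3
    · exact absurd (h3.subset (List.mem_cons_self (a := p) (l := [q]))) (fun h => hdisj2 _ h _ hpvZ rfl)
    · exact absurd h3 (fun h3 => hdisj2 _ h3 _ hpvZ rfl)
    rcases pair_sub_cons h3 with ⟨rfl, _⟩ | h4
    · exact absurd hp hv1
    · exact h4
  rcases hra with haX | hau | haY | hav2 | haZ
  · -- a ∈ X
    by_cases hbX : b ∈ X
    · exact ((peelX a b haX hbX hsub).trans (List.sublist_append_left X A)).trans
        (List.sublist_append_left (X ++ A) _)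
    · have hb2 : b ∈ A ++ v :: u :: (B ++ Z) := by
        rcases hrb with h | rfl | h | rfl | h
        · exact absurd h hbX
        · simp
        · by_cases hbv : Anc E b v
          · have : b ∈ A := List.mem_filter.mpr ⟨h, by simp [hbv]⟩
            simp [this]
          · have : b ∈ B := List.mem_filter.mpr ⟨h, by simp [hbv]⟩
            simp [this]
        · simp
        · simp [h]
      exact memsub haX hb2 (by simp)
  · -- a = u
    obtain rfl := hau.symm
    rcases hrb with hbX | hbu | hbY | hbv2 | hbZ
    · exact (asym u b hsub (memsub hbX (by simp) rfl)).elim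
    · exact absurd hbu.symm hne
    · by_cases hbv : Anc E b v
      · exact absurd (Relation.ReflTransGen.head hab hbv) hnanc
      · have hbB : b ∈ B := List.mem_filter.mpr ⟨hbY, by simp [hbv]⟩
        exact memsub (p := u) (l₁ := X ++ (A ++ [v, u])) (l₂ := B ++ Z) (by simp)
          (List.mem_append_left Z hbB) (by simp)
    · obtain rfl := hbv2.symm
      exact absurd (Relation.ReflTransGen.single hab) hnanc
    · exact memsub (p := u) (l₁ := X ++ (A ++ [v, u])) (l₂ := B ++ Z) (by simp)
        (List.mem_append_right B hbZ) (by simp)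
  · -- a ∈ Y
    have ha2 : a ∈ u :: (Y ++ v :: Z) := List.mem_cons_of_mem _ (List.mem_append_left _ haY)
    by_cases hav : Anc E a v
    · -- a ∈ A
      have haA : a ∈ A := List.mem_filter.mpr ⟨haY, by simp [hav]⟩
      rcases hrb with hbX | hbu | hbY | hbv2 | hbZ
      · exact (asym a b hsub (memsub hbX ha2 rfl)).elim
      · obtain rfl := hbu.symm
        exact (asym a u hsub (memsub (l₁ := X ++ [u]) (l₂ := Y ++ v :: Z) (by simp)
          (List.mem_append_left _ haY) (by simp))).elim
      · by_cases hbv : Anc E b v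
        · have hY := peelY a b haY hbY hsub
          have hfil := hY.filter (fun y => decide (Anc E y v))
          have heq : List.filter (fun y => decide (Anc E y v)) [a, b] = [a, b] := by
            simp [hav, hbv]
          rw [heq] at hfil
          exact ((hfil.trans (List.sublist_append_right X A)).trans
            (List.sublist_append_left (X ++ A) _))
        · have hbB : b ∈ B := List.mem_filter.mpr ⟨hbY, by simp [hbv]⟩
          exact memsub (l₁ := X ++ A) (List.mem_append_right X haA)
            (by simp [hbB]) rfl
      · obtain rfl := hbv2.symm
        exact memsub (l₁ := X ++ A) (List.mem_append_right X haA) (by simp) rfl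
      · exact memsub (l₁ := X ++ A) (List.mem_append_right X haA)
          (by simp [hbZ]) rfl
    · -- a ∈ B
      have haB : a ∈ B := List.mem_filter.mpr ⟨haY, by simp [hav]⟩
      rcases hrb with hbX | hbu | hbY | hbv2 | hbZ
      · exact (asym a b hsub (memsub hbX ha2 rfl)).elim
      · obtain rfl := hbu.symm
        exact (asym a u hsub (memsub (l₁ := X ++ [u]) (l₂ := Y ++ v :: Z) (by simp)
          (List.mem_append_left _ haY) (by simp))).elim
      · by_cases hbv : Anc E b v
        · exact absurd (Relation.ReflTransGen.head hab hbv) hav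
        · have hY := peelY a b haY hbY hsub
          have hfil := hY.filter (fun y => decide (¬ Anc E y v))
          have heq : List.filter (fun y => decide (¬ Anc E y v)) [a, b] = [a, b] := by
            simp [hav, hbv]
          rw [heq] at hfil
          have h1 : List.Sublist [a, b] (v :: u :: (B ++ Z)) :=
            ((hfil.trans (List.sublist_append_left B Z)).cons u).cons v
          exact h1.trans (List.sublist_append_right (X ++ A) _)
      · obtain rfl := hbv2.symm
        exact absurd (Relation.ReflTransGen.single hab) hav
      · exact memsub (l₁ := X ++ (A ++ v :: u :: B)) (l₂ := Z) (by simp [haB]) hbZ (by simp)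
  · -- a = v
    obtain rfl := hav2.symm
    rcases hrb with hbX | hbu | hbY | hbv2 | hbZ
    · exact (asym v b hsub (memsub hbX (by simp) rfl)).elim
    · obtain rfl := hbu.symm
      exact (asym v u hsub (memsub (l₁ := X ++ [u]) (l₂ := Y ++ v :: Z) (by simp) (by simp) (by simp))).elim
    · exact (asym v b hsub (memsub (l₁ := X ++ u :: Y) (l₂ := v :: Z) (by simp [hbY])
        (by simp) (by simp))).elim
    · exact absurd hbv2.symm hne
    · exact memsub (l₁ := X ++ (A ++ [v])) (l₂ := u :: (B ++ Z)) (by simp) (by simp [hbZ]) (by simp)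
  · -- a ∈ Z
    have ha2 : a ∈ u :: (Y ++ v :: Z) :=
      List.mem_cons_of_mem _ (List.mem_append_right _ (List.mem_cons_of_mem _ haZ))
    rcases hrb with hbX | hbu | hbY | hbv2 | hbZ
    · exact (asym a b hsub (memsub hbX ha2 rfl)).elim
    · obtain rfl := hbu.symm
      exact (asym a u hsub (memsub (l₁ := X ++ [u]) (l₂ := Y ++ v :: Z) (by simp)
        (List.mem_append_right _ (List.mem_cons_of_mem _ haZ)) (by simp))).elim
    · exact (asym a b hsub (memsub (l₁ := X ++ u :: Y) (l₂ := v :: Z) (by simp [hbY])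
        (by simp [haZ]) (by simp))).elim
    · obtain rfl := hbv2.symm
      exact (asym a v hsub (memsub (l₁ := X ++ u :: (Y ++ [v])) (l₂ := Z) (by simp)
        haZ (by simp))).elim
    · have hZ := peelZ a b haZ hbZ hsub
      have h1 : List.Sublist [a, b] (v :: u :: (B ++ Z)) :=
        ((hZ.trans (List.sublist_append_right B Z)).cons u).cons v
      exact h1.trans (List.sublist_append_right (X ++ A) _)
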